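/- Let A, B be finite nonempty sets of facilities in a metric space and Γ = Γ(A,B) ⊆ B a minimal subset with d(μ,Γ) = d(μ,B) for all μ ∈ A. Then |Γ| ≤ |A|, and summing the pointwise bound over a finite customer set C with cost(S) = ∑_{x∈C} d(x,S) gives cost(Γ) ≤ 2·cost(A) + cost(B). -/
import Mathlib


/-- Let `Γ = Γ(A,B) ⊆ B` be a minimal subset with `d(μ,Γ) = d(μ,B)` for all
`μ ∈ A`. Then `|Γ| ≤ |A|`, and for any finite customer set `C`, with
`cost S = ∑_{x ∈ C} d(x,S)`, one has `cost Γ ≤ 2 cost A + cost B`. -/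
theorem stmt13 {X : Type*} [MetricSpace X] (A B Γ C : Finset X)
    (hA : A.Nonempty) (hB : B.Nonempty) (hΓB : Γ ⊆ B)
    (hnear : ∀ μ ∈ A, Metric.infDist μ (Γ : Set X) = Metric.infDist μ (B : Set X))
    (hmin : ∀ Γ' ⊆ Γ,
      (∀ μ ∈ A, Metric.infDist μ (Γ' : Set X) = Metric.infDist μ (B : Set X)) → Γ' = Γ) :
    Γ.card ≤ A.card ∧
      ∑ x ∈ C, Metric.infDist x (Γ : Set X)
        ≤ 2 * ∑ x ∈ C, Metric.infDist x (A : Set X)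
          + ∑ x ∈ C, Metric.infDist x (B : Set X) := by
  classical
  constructor
  · -- cardinality bound
    rcases Γ.eq_empty_or_nonempty with hΓ | hΓ
    · simp [hΓ]
    -- choose nearest point in Γ for each point of X
    have hex : ∀ μ : X, ∃ γ ∈ Γ, Metric.infDist μ (Γ : Set X) = dist μ γ := by
      intro μ
      exact Γ.finite_toSet.isCompact.exists_infDist_eq_dist (by exact_mod_cast hΓ) μ
    choose g hgΓ hgd using hex
    have hsub : Γ ⊆ A.image g := by
      intro γ hγ
      by_contra hγim
      have hΓ'sub : Γ.erase γ ⊆ Γ := Finset.erase_subset _ _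
      have key : ∀ μ ∈ A, Metric.infDist μ ((Γ.erase γ : Finset X) : Set X)
          = Metric.infDist μ (B : Set X) := by
        intro μ hμ
        have hgne : g μ ≠ γ := by
          intro h
          exact hγim (Finset.mem_image.2 ⟨μ, hμ, h⟩)
        have hg' : g μ ∈ Γ.erase γ := Finset.mem_erase.2 ⟨hgne, hgΓ μ⟩
        have h1 : Metric.infDist μ ((Γ.erase γ : Finset X) : Set X) ≤ dist μ (g μ) :=
          Metric.infDist_le_dist_of_mem (by exact_mod_cast hg')
        have h2 : Metric.infDist μ (B : Set X)
            ≤ Metric.infDist μ ((Γ.erase γ : Finset X) : Set X) := by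
          apply Metric.infDist_le_infDist_of_subset
          · exact_mod_cast Finset.coe_subset.2 (hΓ'sub.trans hΓB)
          · exact ⟨g μ, by exact_mod_cast hg'⟩
        have := hgd μ
        rw [hnear μ hμ] at this
        refine le_antisymm (by rw [← this] at h1; exact h1) h2
      have heq := hmin (Γ.erase γ) hΓ'sub key
      rw [← heq] at hγ
      exact (Finset.notMem_erase γ Γ) hγ
    calc Γ.card ≤ (A.image g).card := Finset.card_le_card hsub
      _ ≤ A.card := Finset.card_image_le
  · -- cost bound
    have hpt : ∀ x ∈ C, Metric.infDist x (Γ : Set X)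
        ≤ 2 * Metric.infDist x (A : Set X) + Metric.infDist x (B : Set X) := by
      intro x _
      obtain ⟨μ, hμA, hμd⟩ :=
        A.finite_toSet.isCompact.exists_infDist_eq_dist (by exact_mod_cast hA) x
      have h1 : Metric.infDist x (Γ : Set X)
          ≤ Metric.infDist μ (Γ : Set X) + dist x μ :=
        Metric.infDist_le_infDist_add_dist
      have h2 : Metric.infDist μ (B : Set X)
          ≤ Metric.infDist x (B : Set X) + dist μ x :=
        Metric.infDist_le_infDist_add_dist
      rw [hnear μ hμA] at h1
      calc Metric.infDist x (Γ : Set X)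
          ≤ Metric.infDist x (B : Set X) + 2 * dist x μ := by
            rw [dist_comm μ x] at h2; linarith [h1, h2]
        _ = 2 * Metric.infDist x (A : Set X) + Metric.infDist x (B : Set X) := by
            rw [hμd]; ring
    calc ∑ x ∈ C, Metric.infDist x (Γ : Set X)
        ≤ ∑ x ∈ C, (2 * Metric.infDist x (A : Set X) + Metric.infDist x (B : Set X)) :=
          Finset.sum_le_sum hpt
      _ = 2 * ∑ x ∈ C, Metric.infDist x (A : Set X)
          + ∑ x ∈ C, Metric.infDist x (B : Set X) := by
          rw [Finset.sum_add_distrib, Finset.mul_sum]
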